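/- In Dinitz' algorithm with pruning on the bipartite flow network G, the distance from s to t in the residual graph strictly increases after each augmentation by a blocking flow followed by pruning. Consequently, since the level of t is always odd, at least 3, and at most 2n+1 (where n = |P| + |R|), at most n successive such augmentations yield a maximum flow in G. -/

import Mathlib

open scoped Classical

/-- Vertices of the four-layer network: source, providers `P`, consumers `R`, sink. -/
abbrev Vtx (P R : Type*) := (Unit ⊕ P) ⊕ (R ⊕ Unit)

variable {P R : Type*}

def sVx : Vtx P R := Sum.inl (Sum.inl ())
def tVx : Vtx P R := Sum.inr (Sum.inr ())
def pVx (p : P) : Vtx P R := Sum.inl (Sum.inr p)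
def rVx (r : R) : Vtx P R := Sum.inr (Sum.inl r)

section
variable [Fintype P] [Fintype R] (E : P → R → Prop) (s : P → ℝ) (d : R → ℝ)

/-- A flow in the network: nonnegative, supported on edges of the bipartite graph `E`,
respecting the supply capacities of feeder edges and demand capacities of draining edges
(flow conservation at `P` and `R` is implicit: the flow on the feeder edge `(s,p)` is
`∑ r, f p r` and the flow on the draining edge `(r,t)` is `∑ p, f p r`). -/
def IsFlow (f : P → R → ℝ) : Prop :=
  (∀ p r, 0 ≤ f p r) ∧ (∀ p r, f p r ≠ 0 → E p r) ∧
  (∀ p, ∑ r, f p r ≤ s p) ∧ (∀ r, ∑ p, f p r ≤ d r)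

/-- Edges of the residual graph `G(f)`: edges with positive residual capacity. -/
def Res (f : P → R → ℝ) : Vtx P R → Vtx P R → Prop
  | Sum.inl (Sum.inl _), Sum.inl (Sum.inr p) => ∑ r, f p r < s p
  | Sum.inl (Sum.inr p), Sum.inl (Sum.inl _) => 0 < ∑ r, f p r
  | Sum.inl (Sum.inr p), Sum.inr (Sum.inl r) => E p r
  | Sum.inr (Sum.inl r), Sum.inl (Sum.inr p) => 0 < f p r
  | Sum.inr (Sum.inl r), Sum.inr (Sum.inr _) => ∑ p, f p r < d r
  | Sum.inr (Sum.inr _), Sum.inr (Sum.inl r) => 0 < ∑ p, f p r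
  | _, _ => False

end

/-- `ReachIn Rel m u v`: there is a directed walk of length `m` from `u` to `v`. -/
def ReachIn {α : Type*} (Rel : α → α → Prop) : ℕ → α → α → Prop
  | 0 => fun u v => u = v
  | n + 1 => fun u v => ∃ w, Rel u w ∧ ReachIn Rel n w v

/-- BFS distance (level) from `src` to `v` in a directed graph, valued in `ℕ∞`. -/
noncomputable def lvl {α : Type*} (Rel : α → α → Prop) (src v : α) : ℕ∞ :=
  sInf {n : ℕ∞ | ∃ m : ℕ, ReachIn Rel m src v ∧ n = (m : ℕ∞)}

section
variable [Fintype P] [Fintype R] (E : P → R → Prop) (s : P → ℝ) (d : R → ℝ)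

/-- Edges of the level graph `L(f)`: residual edges `(u,v)` with `ℓ(v) = ℓ(u) + 1`. -/
def LevelEdge (f : P → R → ℝ) (u v : Vtx P R) : Prop :=
  Res E s d f u v ∧ lvl (Res E s d f) sVx v = lvl (Res E s d f) sVx u + 1

/-- The edge `(u,v)` of the level graph is saturated by the augmentation `g`
(with respect to the base flow `f`): a feeder edge is saturated if the new feeder flow
equals the supply, a backward edge `(r,p)` if the new flow on `(p,r)` is zero, a draining
edge if the new draining flow equals the demand; forward edges (infinite capacity) are
never saturated. -/
def Saturated (f g : P → R → ℝ) : Vtx P R → Vtx P R → Prop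
  | Sum.inl (Sum.inl _), Sum.inl (Sum.inr p) => ∑ r, (f p r + g p r) = s p
  | Sum.inr (Sum.inl r), Sum.inl (Sum.inr p) => f p r + g p r = 0
  | Sum.inr (Sum.inl r), Sum.inr (Sum.inr _) => ∑ p, (f p r + g p r) = d r
  | _, _ => False

/-- `g` is a blocking flow in the level graph `L(f)` (recorded as the signed change on
the pairs `P × R`; positive values use forward level edges, negative values use backward
level edges): the augmented function `f + g` is again a flow, and every path from `s` to
`t` in `L(f)` contains an edge saturated by `g`. -/
def IsBlocking (f g : P → R → ℝ) : Prop :=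
  (∀ p r, 0 < g p r → LevelEdge E s d f (pVx p) (rVx r)) ∧
  (∀ p r, g p r < 0 → LevelEdge E s d f (rVx r) (pVx p)) ∧
  (∀ p, 0 ≤ ∑ r, g p r) ∧ (∀ r, 0 ≤ ∑ p, g p r) ∧
  (∀ p, 0 < ∑ r, g p r → LevelEdge E s d f sVx (pVx p)) ∧
  (∀ r, 0 < ∑ p, g p r → LevelEdge E s d f (rVx r) tVx) ∧
  IsFlow E s d (fun p r => f p r + g p r) ∧
  (∀ l : List (Vtx P R), l.Chain' (LevelEdge E s d f) →
    l.head? = some sVx → l.getLast? = some tVx →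
    ∃ uv ∈ l.zip l.tail, Saturated s d f g uv.1 uv.2)

end

/-- The undirected support graph `H(f)` on `P ⊕ R`: an edge between `p` and `r`
whenever `f p r > 0`. -/
def suppGraph {P R : Type*} (f : P → R → ℝ) : SimpleGraph (P ⊕ R) :=
  SimpleGraph.fromRel (fun x y =>
    match x, y with
    | Sum.inl p, Sum.inr r => 0 < f p r
    | _, _ => False)

/-- `f'` is obtained from `h` by pruning (repeatedly cancelling flow around cycles of the
support graph): `f'` is nonnegative, has the same feeder and draining flows as `h` (hence
the same value), is supported on the support of `h`, and its support graph is a forest. -/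
def Pruned {P R : Type*} [Fintype P] [Fintype R] (h f' : P → R → ℝ) : Prop :=
  (∀ p r, 0 ≤ f' p r) ∧
  (∀ p, ∑ r, f' p r = ∑ r, h p r) ∧ (∀ r, ∑ p, f' p r = ∑ p, h p r) ∧
  (∀ p r, f' p r ≠ 0 → h p r ≠ 0) ∧
  (suppGraph f').IsAcyclic

/-- One augmentation of Dinitz' algorithm with pruning: augment the flow `f` by a
blocking flow `g` of the level graph `L(f)` and prune the result. -/
def DinitzStep {P R : Type*} [Fintype P] [Fintype R]
    (E : P → R → Prop) (s : P → ℝ) (d : R → ℝ) (f f' : P → R → ℝ) : Prop :=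
  ∃ g, IsBlocking E s d f g ∧ Pruned (fun p r => f p r + g p r) f'

/-! ### Auxiliary lemmas -/

section AuxGeneric
variable {α : Type*} {Rel : α → α → Prop}

theorem reachIn_append : ∀ {a : ℕ} {b : ℕ} {u w v : α},
    ReachIn Rel a u w → ReachIn Rel b w v → ReachIn Rel (a + b) u v
  | 0, b, u, w, v, h1, h2 => by subst h1; simpa using h2
  | a + 1, b, u, w, v, h1, h2 => by
      obtain ⟨x, hx, h1'⟩ := h1
      have : ReachIn Rel (a + b) x v := reachIn_append h1' h2
      have : ReachIn Rel ((a + b) + 1) u v := ⟨x, hx, this⟩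
      simpa [Nat.succ_add, Nat.add_assoc, Nat.add_comm, Nat.add_left_comm] using this

theorem reachIn_fun : ∀ {m : ℕ} {u v : α}, ReachIn Rel m u v →
    ∃ w : ℕ → α, w 0 = u ∧ w m = v ∧ ∀ i < m, Rel (w i) (w (i + 1))
  | 0, u, v, h => ⟨fun _ => u, rfl, h ▸ rfl, by omega⟩
  | m + 1, u, v, h => by
      obtain ⟨x, hx, h'⟩ := h
      obtain ⟨w', h0, hm, hrel⟩ := reachIn_fun h'
      refine ⟨fun i => match i with | 0 => u | (j+1) => w' j, rfl, hm, ?_⟩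
      intro i hi
      match i with
      | 0 => simpa [h0] using hx
      | j + 1 => exact hrel j (by omega)

theorem reachIn_of_fun {m : ℕ} {w : ℕ → α} (h : ∀ i < m, Rel (w i) (w (i + 1))) :
    ∀ (c : ℕ) (a : ℕ), a + c ≤ m → ReachIn Rel c (w a) (w (a + c))
  | 0, a, _ => rfl
  | c + 1, a, hle => by
      refine ⟨w (a + 1), h a (by omega), ?_⟩
      have := reachIn_of_fun h c (a + 1) (by omega)
      have he : a + 1 + c = a + (c + 1) := by omega
      rwa [he] at this

theorem reachIn_shorten [Fintype α] {u v : α} :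
    ∀ m, ReachIn Rel m u v → ∃ m' ≤ Fintype.card α - 1, ReachIn Rel m' u v := by
  intro m
  induction m using Nat.strong_induction_on with
  | _ m ih =>
    intro h
    by_cases hm : m ≤ Fintype.card α - 1
    · exact ⟨m, hm, h⟩
    · obtain ⟨w, h0, hmv, hrel⟩ := reachIn_fun h
      have hcard : Fintype.card α < Fintype.card (Fin (m + 1)) := by
        have : 1 ≤ Fintype.card α := Fintype.card_pos_iff.mpr ⟨u⟩
        simp; omega
      obtain ⟨i, j, hne, heq⟩ := Fintype.exists_ne_map_eq_of_card_lt
        (fun i : Fin (m + 1) => w i) hcard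
      wlog hij : (i : ℕ) < (j : ℕ) generalizing i j
      · exact this j i hne.symm heq.symm (by omega)
      have h1 : ReachIn Rel i (w 0) (w (0 + i)) := reachIn_of_fun hrel i 0 (by omega)
      have h2 : ReachIn Rel (m - j) (w j) (w (j + (m - j))) :=
        reachIn_of_fun hrel (m - j) j (by omega)
      rw [show (j : ℕ) + (m - j) = m by omega, hmv] at h2
      rw [Nat.zero_add, h0, heq] at h1
      have := reachIn_append h1 h2
      exact ih _ (by omega) this

theorem lvl_le {src v : α} {m : ℕ} (h : ReachIn Rel m src v) :
    lvl Rel src v ≤ (m : ℕ∞) := sInf_le ⟨m, h, rfl⟩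

theorem le_lvl {src v : α} (k : ℕ∞) (h : ∀ m : ℕ, ReachIn Rel m src v → k ≤ (m : ℕ∞)) :
    k ≤ lvl Rel src v := le_sInf (by rintro n ⟨m, hm, rfl⟩; exact h m hm)

theorem lvl_eq_of_reach {src v : α} (h : ∃ m, ReachIn Rel m src v) :
    ∃ m : ℕ, lvl Rel src v = (m : ℕ∞) ∧ ReachIn Rel m src v := by
  refine ⟨Nat.find h, le_antisymm (lvl_le (Nat.find_spec h)) ?_, Nat.find_spec h⟩
  exact le_lvl _ fun m hm => Nat.cast_le.mpr (Nat.find_min' h hm)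

theorem lvl_self (src : α) : lvl Rel src src = 0 :=
  le_antisymm (lvl_le (show ReachIn Rel 0 src src from rfl)) (zero_le)

theorem lvl_succ_le {src u v : α} (h : Rel u v) : lvl Rel src v ≤ lvl Rel src u + 1 := by
  by_cases hr : ∃ m, ReachIn Rel m src u
  · obtain ⟨m, hm, hre⟩ := lvl_eq_of_reach hr
    rw [hm]
    have : ReachIn Rel (m + 1) src v := reachIn_append hre ⟨v, h, rfl⟩
    simpa using lvl_le this
  · have : lvl Rel src u = ⊤ := by
      refine le_antisymm le_top (le_lvl _ fun m hm => absurd ⟨m, hm⟩ hr)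
    simp [this]

theorem mem_zip_tail : ∀ (l : List α) (a b : α), (a, b) ∈ l.zip l.tail →
    ∃ i, l[i]? = some a ∧ l[i + 1]? = some b
  | [], a, b, h => by simp at h
  | [x], a, b, h => by simp at h
  | x :: y :: l'', a, b, h => by
      rcases List.mem_cons.mp h with h | h
      · obtain ⟨rfl, rfl⟩ := Prod.mk.injEq .. ▸ h
        · exact ⟨0, rfl, rfl⟩
      · obtain ⟨i, h1, h2⟩ := mem_zip_tail (y :: l'') a b h
        exact ⟨i + 1, h1, h2⟩

end AuxGeneric

section AuxNet
variable {P R : Type*} [Fintype P] [Fintype R] {E : P → R → Prop} {s : P → ℝ} {d : R → ℝ}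

theorem res_min_length {f : P → R → ℝ} :
    ∀ m, ReachIn (Res E s d f) m sVx tVx → 3 ≤ m := by
  intro m h
  match m with
  | 0 => exact absurd h (by simp [ReachIn, sVx, tVx])
  | 1 =>
    obtain ⟨w, hw, rfl⟩ := h
    exact absurd hw (by simp [Res, sVx, tVx])
  | 2 =>
    obtain ⟨w, hw, w', hw', rfl⟩ := h
    rcases w with (_ | p) | (r | _)
    · exact absurd hw (by simp [Res, sVx])
    · exact absurd hw' (by simp [Res, tVx])
    · exact absurd hw (by simp [Res, sVx])
    · exact absurd hw (by simp [Res, sVx])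
  | (n + 3) => omega

theorem isFlow_pruned {h f' : P → R → ℝ} (hh : IsFlow E s d h) (hp : Pruned h f') :
    IsFlow E s d f' := by
  obtain ⟨hpos, hrow, hcol, hsupp, _⟩ := hp
  exact ⟨hpos, fun p r hne => hh.2.1 p r (hsupp p r hne),
    fun p => (hrow p) ▸ hh.2.2.1 p, fun r => (hcol r) ▸ hh.2.2.2 r⟩

theorem res_pruned_subset {h f' : P → R → ℝ} (hh : IsFlow E s d h) (hp : Pruned h f') :
    ∀ u v, Res E s d f' u v → Res E s d h u v := by
  obtain ⟨hpos, hrow, hcol, hsupp, _⟩ := hp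
  rintro ((_ | p) | (r | _)) ((_ | p') | (r' | _)) hres <;>
    simp only [Res] at hres ⊢ <;> try exact hres
  · exact hrow p' ▸ hres
  · exact hrow p ▸ hres
  · exact lt_of_le_of_ne (hh.1 p' r) (fun e => hsupp p' r (by linarith [hres]) e.symm)
  · exact hcol r ▸ hres
  · exact hcol r' ▸ hres

end AuxNet

section AuxNet2
variable {P R : Type*} [Fintype P] [Fintype R] {E : P → R → Prop} {s : P → ℝ} {d : R → ℝ}

theorem res_h_cases {f g : P → R → ℝ} (hf : IsFlow E s d f) (hb : IsBlocking E s d f g) :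
    ∀ u v, Res E s d (fun p r => f p r + g p r) u v →
      Res E s d f u v ∨ LevelEdge E s d f v u := by
  obtain ⟨hpos, hneg, hrow, hcol, hsrc, hsink, hflow, _⟩ := hb
  rintro ((_ | p) | (r | _)) ((_ | p') | (r' | _)) hres <;>
    simp only [Res] at hres ⊢ <;> try exact hres.elim
  · -- s → p'
    left
    have := hrow p'
    rw [Finset.sum_add_distrib] at hres
    linarith
  · -- p → s
    rw [Finset.sum_add_distrib] at hres
    rcases lt_or_ge 0 (∑ r, f p r) with hlt | hle
    · exact Or.inl hlt
    · right
      have h0 : ∑ r, f p r = 0 :=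
        le_antisymm hle (Finset.sum_nonneg fun r _ => hf.1 p r)
      exact hsrc p (by linarith)
  · -- p → r'
    exact Or.inl hres
  · -- r → p'
    rcases lt_or_ge 0 (f p' r) with hlt | hle
    · exact Or.inl hlt
    · right
      have h0 : f p' r = 0 := le_antisymm hle (hf.1 p' r)
      exact hpos p' r (by linarith)
  · -- r → t
    left
    have := hcol r
    rw [Finset.sum_add_distrib] at hres
    linarith
  · -- t → r'
    rw [Finset.sum_add_distrib] at hres
    rcases lt_or_ge 0 (∑ p, f p r') with hlt | hle
    · exact Or.inl hlt
    · right
      have h0 : ∑ p, f p r' = 0 :=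
        le_antisymm hle (Finset.sum_nonneg fun p _ => hf.1 p r')
      exact hsink r' (by linarith)

theorem saturated_not_res {f g : P → R → ℝ} :
    ∀ u v, Saturated s d f g u v → ¬ Res E s d (fun p r => f p r + g p r) u v := by
  rintro ((_ | p) | (r | _)) ((_ | p') | (r' | _)) hsat <;>
      simp only [Saturated] at hsat <;> simp only [Res] <;> try exact fun h => h
  · exact fun h => absurd hsat (ne_of_gt h).symm
  · exact fun h => absurd hsat (ne_of_gt h)
  · exact fun h => absurd hsat (ne_of_gt h).symm

end AuxNet2

section AuxStep
variable {P R : Type*} [Fintype P] [Fintype R] {E : P → R → Prop} {s : P → ℝ} {d : R → ℝ}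

theorem lvl_lt_step {f f' : P → R → ℝ} (hf : IsFlow E s d f)
    (hstep : DinitzStep E s d f f')
    (hreach : ∃ m, ReachIn (Res E s d f) m sVx tVx) :
    lvl (Res E s d f) sVx tVx < lvl (Res E s d f') sVx tVx := by
  obtain ⟨g, hb, hpr⟩ := hstep
  set h : P → R → ℝ := fun p r => f p r + g p r with hh
  have hhf : IsFlow E s d h := hb.2.2.2.2.2.2.1
  set ℓ : Vtx P R → ℕ∞ := lvl (Res E s d f) sVx with hℓ
  have hE1 : ∀ u v, Res E s d f' u v → Res E s d h u v := res_pruned_subset hhf hpr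
  have hE2 : ∀ u v, Res E s d h u v → ℓ v ≤ ℓ u + 1 := by
    intro u v hr
    rcases res_h_cases hf hb u v hr with hr | hr
    · exact lvl_succ_le hr
    · simp only [hℓ]; rw [hr.2]; exact le_add_right (le_add_right le_rfl)
  have hE3 : ∀ u v, Res E s d h u v → ℓ u ≠ ⊤ → ℓ v = ℓ u + 1 → LevelEdge E s d f u v := by
    intro u v hr hne heq
    rcases res_h_cases hf hb u v hr with hr' | hr'
    · exact ⟨hr', heq⟩
    · exfalso
      have : ℓ u = ℓ u + 1 + 1 := by
        simp only [hℓ] at heq ⊢; rw [← heq, hr'.2]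
      lift ℓ u to ℕ using hne with n
      exact absurd (by exact_mod_cast this) (by omega)
  by_contra hcon
  push_neg at hcon
  obtain ⟨K, hK, hKre⟩ := lvl_eq_of_reach hreach
  simp only [hℓ] at hcon
  rw [hK] at hcon
  have hfin : lvl (Res E s d f') sVx tVx ≠ ⊤ := fun e => by simp [e] at hcon
  have hreach' : ∃ m, ReachIn (Res E s d f') m sVx tVx := by
    by_contra hc
    exact hfin (le_antisymm le_top (le_lvl _ fun m hm => absurd ⟨m, hm⟩ hc))
  obtain ⟨k, hk, hkre⟩ := lvl_eq_of_reach hreach'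
  rw [hk] at hcon
  have hkK : k ≤ K := by exact_mod_cast hcon
  obtain ⟨w, hw0, hwk, hwrel⟩ := reachIn_fun hkre
  -- upward bound: ℓ (w i) ≤ i
  have hup : ∀ i ≤ k, ℓ (w i) ≤ (i : ℕ∞) := by
    intro i
    induction i with
    | zero => intro _; rw [hw0]; exact le_of_eq (lvl_self _)
    | succ j ihj =>
      intro hjk
      calc ℓ (w (j + 1)) ≤ ℓ (w j) + 1 := hE2 _ _ (hE1 _ _ (hwrel j (by omega)))
        _ ≤ (j : ℕ∞) + 1 := add_le_add_left (ihj (by omega)) 1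
        _ = ((j + 1 : ℕ) : ℕ∞) := by push_cast; ring
  -- k = K
  have hℓt : ℓ tVx = (K : ℕ∞) := by simp only [hℓ]; exact hK
  have hkub : (K : ℕ∞) ≤ (k : ℕ∞) := hℓt ▸ (hwk ▸ hup k le_rfl)
  have hkeq : k = K := le_antisymm hkK (by exact_mod_cast hkub)
  -- downward bound: ℓ (w (k - j)) ≥ k - j
  have hdown : ∀ j ≤ k, ((k - j : ℕ) : ℕ∞) ≤ ℓ (w (k - j)) := by
    intro j
    induction j with
    | zero =>
      intro _
      rw [Nat.sub_zero, hwk, hℓt, hkeq]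
    | succ j ihj =>
      intro hjk
      have hij : k - (j + 1) + 1 = k - j := by omega
      have hedge : ℓ (w (k - j)) ≤ ℓ (w (k - (j + 1))) + 1 := by
        rw [← hij]; exact hE2 _ _ (hE1 _ _ (hwrel _ (by omega)))
      have := le_trans (ihj (by omega)) hedge
      have h2 : ((k - (j + 1) : ℕ) : ℕ∞) + 1 ≤ ℓ (w (k - (j + 1))) + 1 := by
        calc ((k - (j + 1) : ℕ) : ℕ∞) + 1 = ((k - j : ℕ) : ℕ∞) := by
              rw [← hij]; push_cast; ring
          _ ≤ ℓ (w (k - (j + 1))) + 1 := this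
      exact (ENat.add_le_add_iff_right (by simp)).mp h2
  have hexact : ∀ i ≤ k, ℓ (w i) = (i : ℕ∞) := by
    intro i hi
    have := hdown (k - i) (by omega)
    rw [show k - (k - i) = i by omega] at this
    exact le_antisymm (hup i hi) this
  -- each edge is a level edge
  have hlev : ∀ i < k, LevelEdge E s d f (w i) (w (i + 1)) := by
    intro i hi
    refine hE3 _ _ (hE1 _ _ (hwrel i hi)) ?_ ?_
    · rw [hexact i (by omega)]; simp
    · rw [hexact i (by omega), hexact (i + 1) (by omega)]; push_cast; ring
  -- build the path list and apply blocking
  set l : List (Vtx P R) := (List.range (k + 1)).map w with hl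
  have hchain : l.Chain' (LevelEdge E s d f) := by
    rw [hl]; show List.IsChain _ _; rw [List.isChain_map, List.isChain_range_succ]
    exact hlev
  have hhead : l.head? = some sVx := by
    rw [hl, List.head?_map, List.range_succ_eq_map]
    simp [hw0]
  have hlast : l.getLast? = some tVx := by
    rw [hl, List.range_succ, List.map_append]
    simp [List.getLast?_concat, hwk]
  obtain ⟨uv, huvmem, huvsat⟩ := hb.2.2.2.2.2.2.2 l hchain hhead hlast
  obtain ⟨i, hi1, hi2⟩ := mem_zip_tail l uv.1 uv.2 (by simpa using huvmem)
  have hlen : i + 1 < k + 1 := by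
    by_contra hc
    rw [hl, List.getElem?_map, List.getElem?_eq_none_iff.mpr (by simpa using hc)] at hi2
    simp at hi2
  have he1 : uv.1 = w i := by
    rw [hl, List.getElem?_map, List.getElem?_range (by omega)] at hi1
    simpa using hi1.symm
  have he2 : uv.2 = w (i + 1) := by
    rw [hl, List.getElem?_map, List.getElem?_range (by omega)] at hi2
    simpa using hi2.symm
  exact saturated_not_res uv.1 uv.2 huvsat
    (he1 ▸ he2 ▸ hE1 _ _ (hwrel i (by omega)))

end AuxStep

section AuxMax
variable {P R : Type*} [Fintype P] [Fintype R] {E : P → R → Prop} {s : P → ℝ} {d : R → ℝ}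

theorem maxflow_of_unreachable {F : P → R → ℝ} (hF : IsFlow E s d F)
    (hun : ¬ ∃ m, ReachIn (Res E s d F) m sVx tVx) :
    ∀ f, IsFlow E s d f → ∑ p, ∑ r, f p r ≤ ∑ p, ∑ r, F p r := by
  intro f hf
  set S : Vtx P R → Prop := fun v => ∃ m, ReachIn (Res E s d F) m sVx v with hS
  have hsS : S sVx := ⟨0, rfl⟩
  have hext : ∀ u v, S u → Res E s d F u v → S v := by
    rintro u v ⟨m, hm⟩ h
    exact ⟨m + 1, reachIn_append hm ⟨v, h, rfl⟩⟩
  set A : Finset P := Finset.univ.filter (fun p => S (pVx p)) with hAdef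
  set B : Finset R := Finset.univ.filter (fun r => S (rVx r)) with hBdef
  have hmemA : ∀ p, p ∈ A ↔ S (pVx p) := by intro p; simp [hAdef]
  have hmemB : ∀ r, r ∈ B ↔ S (rVx r) := by intro r; simp [hBdef]
  have hA : ∀ p ∉ A, ∑ r, F p r = s p := by
    intro p hp
    refine le_antisymm (hF.2.2.1 p) (le_of_not_gt fun hlt => ?_)
    exact hp ((hmemA p).mpr (hext _ _ hsS (show Res E s d F sVx (pVx p) from hlt)))
  have hB : ∀ r ∈ B, ∑ p, F p r = d r := by
    intro r hr
    refine le_antisymm (hF.2.2.2 r) (le_of_not_gt fun hlt => ?_)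
    exact hun (hext _ _ ((hmemB r).mp hr) (show Res E s d F (rVx r) tVx from hlt))
  have hPR : ∀ p ∈ A, ∀ r, E p r → r ∈ B := by
    intro p hp r hE
    exact (hmemB r).mpr (hext _ _ ((hmemA p).mp hp) (show Res E s d F (pVx p) (rVx r) from hE))
  have hz : ∀ p ∉ A, ∀ r ∈ B, F p r = 0 := by
    intro p hp r hr
    refine le_antisymm (le_of_not_gt fun hlt => ?_) (hF.1 p r)
    exact hp ((hmemA p).mpr (hext _ _ ((hmemB r).mp hr)
      (show Res E s d F (rVx r) (pVx p) from hlt)))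
  -- cut value comparison
  have hrowB : ∀ (g : P → R → ℝ), IsFlow E s d g → ∀ p ∈ A,
      ∑ r, g p r = ∑ r ∈ B, g p r := by
    intro g hg p hp
    refine (Finset.sum_subset (Finset.subset_univ B) fun r _ hr => ?_).symm
    by_contra hne
    exact hr (hPR p hp r (hg.2.1 p r hne))
  have split : ∀ (g : P → R → ℝ),
      ∑ p, ∑ r, g p r = ∑ p ∈ A, ∑ r, g p r + ∑ p ∈ Aᶜ, ∑ r, g p r := by
    intro g
    rw [← Finset.sum_add_sum_compl A]
  -- general flow bound
  have hub : ∑ p, ∑ r, f p r ≤ ∑ p ∈ Aᶜ, s p + ∑ r ∈ B, d r := by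
    rw [split f]
    have h1 : ∑ p ∈ Aᶜ, ∑ r, f p r ≤ ∑ p ∈ Aᶜ, s p :=
      Finset.sum_le_sum fun p _ => hf.2.2.1 p
    have h2 : ∑ p ∈ A, ∑ r, f p r ≤ ∑ r ∈ B, d r := by
      calc ∑ p ∈ A, ∑ r, f p r = ∑ p ∈ A, ∑ r ∈ B, f p r :=
            Finset.sum_congr rfl fun p hp => hrowB f hf p hp
        _ ≤ ∑ p, ∑ r ∈ B, f p r := by
            refine Finset.sum_le_sum_of_subset_of_nonneg (Finset.subset_univ A)
              fun p _ _ => Finset.sum_nonneg fun r _ => hf.1 p r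
        _ = ∑ r ∈ B, ∑ p, f p r := Finset.sum_comm
        _ ≤ ∑ r ∈ B, d r := Finset.sum_le_sum fun r _ => hf.2.2.2 r
    linarith
  -- F attains the cut value
  have heqF : ∑ p, ∑ r, F p r = ∑ p ∈ Aᶜ, s p + ∑ r ∈ B, d r := by
    rw [split F]
    have h1 : ∑ p ∈ Aᶜ, ∑ r, F p r = ∑ p ∈ Aᶜ, s p :=
      Finset.sum_congr rfl fun p hp => hA p (by simpa using hp)
    have h2 : ∑ p ∈ A, ∑ r, F p r = ∑ r ∈ B, d r := by
      calc ∑ p ∈ A, ∑ r, F p r = ∑ p ∈ A, ∑ r ∈ B, F p r :=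
            Finset.sum_congr rfl fun p hp => hrowB F hF p hp
        _ = ∑ p, ∑ r ∈ B, F p r := by
            apply Finset.sum_subset (Finset.subset_univ A)
            intro p _ hp
            exact Finset.sum_eq_zero fun r hr => hz p hp r hr
        _ = ∑ r ∈ B, ∑ p, F p r := Finset.sum_comm
        _ = ∑ r ∈ B, d r := Finset.sum_congr rfl fun r hr => hB r hr
    linarith
  rw [heqF]; exact hub

end AuxMax
/-- In Dinitz' algorithm with pruning, the `s`-`t` distance in the residual graph strictly
increases with every augmentation; since the level of `t` is always odd, at least `3` and
at most `2n+1` with `n = |P| + |R|`, after at most `n` augmentations (performed while `t`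
is reachable from `s` in the residual graph) the sink is unreachable and the current flow
is a maximum flow. -/
theorem stmt12 {P R : Type*} [Fintype P] [Fintype R]
    (E : P → R → Prop) (s : P → ℝ) (d : R → ℝ)
    (F : ℕ → P → R → ℝ)
    (hF0 : IsFlow E s d (F 0))
    (hzero : ∀ p r, F 0 p r = 0)
    (hstep : ∀ k,
      ((∃ m, ReachIn (Res E s d (F k)) m sVx tVx) →
          DinitzStep E s d (F k) (F (k + 1))) ∧
      ((¬ ∃ m, ReachIn (Res E s d (F k)) m sVx tVx) → F (k + 1) = F k))
    :
    -- after `n = |P| + |R|` augmentations: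
    (¬ ∃ m, ReachIn (Res E s d (F (Fintype.card P + Fintype.card R))) m sVx tVx) ∧
    (∀ f, IsFlow E s d f →
      ∑ p, ∑ r, f p r ≤ ∑ p, ∑ r, F (Fintype.card P + Fintype.card R) p r) ∧
    (∀ k, (∃ m, ReachIn (Res E s d (F k)) m sVx tVx) →
      lvl (Res E s d (F k)) sVx tVx < lvl (Res E s d (F (k + 1))) sVx tVx) := by
  set n := Fintype.card P + Fintype.card R with hn
  have hflow : ∀ k, IsFlow E s d (F k) := by
    intro k
    induction k with
    | zero => exact hF0
    | succ k ih =>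
      by_cases hre : ∃ m, ReachIn (Res E s d (F k)) m sVx tVx
      · obtain ⟨g, hb, hpr⟩ := (hstep k).1 hre
        exact isFlow_pruned hb.2.2.2.2.2.2.1 hpr
      · rw [(hstep k).2 hre]; exact ih
  have part3 : ∀ k, (∃ m, ReachIn (Res E s d (F k)) m sVx tVx) →
      lvl (Res E s d (F k)) sVx tVx < lvl (Res E s d (F (k + 1))) sVx tVx :=
    fun k hre => lvl_lt_step (hflow k) ((hstep k).1 hre) hre
  have part1 : ¬ ∃ m, ReachIn (Res E s d (F n)) m sVx tVx := by
    by_contra hre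
    have hall : ∀ j, j ≤ n → ∃ m, ReachIn (Res E s d (F j)) m sVx tVx := by
      intro j hj
      by_contra hc
      have hfwd : ∀ i, ¬ ∃ m, ReachIn (Res E s d (F (j + i))) m sVx tVx := by
        intro i
        induction i with
        | zero => simpa using hc
        | succ i ih =>
          rw [show j + (i + 1) = (j + i) + 1 by ring, (hstep (j + i)).2 ih]
          exact ih
      have := hfwd (n - j)
      rw [show j + (n - j) = n by omega] at this
      exact this hre
    have hgrow : ∀ k, k ≤ n → ((k + 3 : ℕ) : ℕ∞) ≤ lvl (Res E s d (F k)) sVx tVx := by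
      intro k
      induction k with
      | zero =>
        intro _
        exact le_lvl _ fun m hm => Nat.cast_le.mpr (by have := res_min_length m hm; omega)
      | succ k ih =>
        intro hk
        have h1 := part3 k (hall k (by omega))
        have h2 := ih (by omega)
        have h3 := Order.add_one_le_of_lt (lt_of_le_of_lt h2 h1)
        calc ((k + 1 + 3 : ℕ) : ℕ∞) = ((k + 3 : ℕ) : ℕ∞) + 1 := by push_cast; ring
          _ ≤ _ := h3
    obtain ⟨m, hm⟩ := hre
    obtain ⟨m', hm'le, hm're⟩ := reachIn_shorten m hm
    have hcard : Fintype.card (Vtx P R) = n + 2 := by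
      simp [Vtx, hn]; ring
    rw [hcard] at hm'le
    have hub : lvl (Res E s d (F n)) sVx tVx ≤ ((n + 1 : ℕ) : ℕ∞) :=
      le_trans (lvl_le hm're) (Nat.cast_le.mpr (by omega))
    have hlb := hgrow n le_rfl
    have hcontra : ((n + 3 : ℕ) : ℕ∞) ≤ ((n + 1 : ℕ) : ℕ∞) := le_trans hlb hub
    exact absurd (Nat.cast_le.mp hcontra) (by omega)
  exact ⟨part1, maxflow_of_unreachable (hflow n) part1, part3⟩
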